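/- arXiv:1909.09407 — 10 statements merged into one kernel-verified Lean document; each statement's English description precedes it below -/
import Mathlib

section
/- A ceer R is self-full if and only if R ⊕ Id₁ is not computably reducible to R, where Id₁ is the equivalence relation on ℕ with exactly one class. -/
/-- `f` is a computable reduction from `R` to `S`. -/
def CReduction (f : ℕ → ℕ) (R S : ℕ → ℕ → Prop) : Prop :=
  Computable f ∧ ∀ x y, R x y ↔ S (f x) (f y)

/-- `R` is computably reducible to `S`. -/
def Reduces (R S : ℕ → ℕ → Prop) : Prop := ∃ f, CReduction f R S

/-- A ceer: a computably enumerable equivalence relation on ℕ. -/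
def Ceer (R : ℕ → ℕ → Prop) : Prop :=
  Equivalence R ∧ REPred fun p : ℕ × ℕ => R p.1 p.2

/-- `R` is self-full: every computable self-reduction has range meeting every class. -/
def SelfFull (R : ℕ → ℕ → Prop) : Prop :=
  ∀ f, CReduction f R R → ∀ y, ∃ x, R (f x) y

/-- Uniform join `R ⊕ S`: evens code `R`, odds code `S`. -/
def join (R S : ℕ → ℕ → Prop) : ℕ → ℕ → Prop :=
  fun a b => (∃ x y, a = 2*x ∧ b = 2*y ∧ R x y) ∨
             (∃ x y, a = 2*x+1 ∧ b = 2*y+1 ∧ S x y)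

/-- A Π⁰₁ relation: the complement is c.e. -/
def Pi01 (C : ℕ → ℕ → Prop) : Prop :=
  REPred fun p : ℕ × ℕ => ¬ C p.1 p.2

/-- `R` has infinitely many equivalence classes. -/
def InfiniteClasses (R : ℕ → ℕ → Prop) : Prop :=
  ∀ l : List ℕ, ∃ x, ∀ y ∈ l, ¬ R x y

/-- `R` has only finitely many equivalence classes. -/
def FiniteClasses (R : ℕ → ℕ → Prop) : Prop :=
  ∃ l : List ℕ, ∀ x, ∃ y ∈ l, R x y

/-- `X` is co-ceer-resistant. -/
def CoCeerResistant (X : ℕ → ℕ → Prop) : Prop :=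
  ∀ C : ℕ → ℕ → Prop, Equivalence C → Pi01 C → InfiniteClasses C →
    ∃ x y, X x y ∧ ¬ C x y

/-- `X` is hereditarily self-full. -/
def HSF (X : ℕ → ℕ → Prop) : Prop :=
  ∀ Y, Ceer Y → SelfFull Y → SelfFull (join X Y)

/-- `IdN n` is a ceer with exactly `n + 1` classes; so `IdN (n-1)` plays the role of `Idₙ` for `n ≥ 1`. -/
def IdN (n : ℕ) : ℕ → ℕ → Prop := fun x y => min x n = min y n

/-- A universal ceer: every ceer reduces to it. -/
def Universal (U : ℕ → ℕ → Prop) : Prop := ∀ R, Ceer R → Reduces R U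

/-- The Π⁰₁ equivalence relation `∼ᶠ` induced by a self-reduction `f` of a uniform join. -/
def simF (f : ℕ → ℕ) : ℕ → ℕ → Prop :=
  fun n m => ∀ k, (Even (f^[k] (2*n)) ↔ Even (f^[k] (2*m)))

/-- A sequence is eventually periodic. -/
def EventuallyPeriodic (τ : ℕ → Bool) : Prop :=
  ∃ N p, 0 < p ∧ ∀ k, N ≤ k → τ (k + p) = τ k

/-- A ceer `R` is self-full iff `R ⊕ Id₁ ≰ R`, where `Id₁` relates all naturals. -/
theorem stmt0 (R : ℕ → ℕ → Prop) (hR : Ceer R) :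
    SelfFull R ↔ ¬ Reduces (join R (fun _ _ => True)) R := by
  constructor
  · rintro hSF ⟨f, hfc, hf⟩
    have hg : CReduction (fun x => f (2*x)) R R := by
      refine ⟨hfc.comp (Primrec.to_comp (Primrec.nat_mul.comp (.const 2) .id)), ?_⟩
      intro x y
      rw [← hf (2*x) (2*y)]
      constructor
      · intro h; exact Or.inl ⟨x, y, rfl, rfl, h⟩
      · rintro (⟨a,b,ha,hb,h⟩|⟨a,b,ha,hb,h⟩)
        · obtain rfl : a = x := by omega
          obtain rfl : b = y := by omega
          exact h
        · omega
    obtain ⟨x, hx⟩ := hSF _ hg (f 1)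
    have : join R (fun _ _ => True) (2*x) 1 := (hf (2*x) 1).mpr hx
    rcases this with ⟨a,b,ha,hb,_⟩|⟨a,b,ha,hb,_⟩ <;> omega
  · intro hnr g hg y₀
    by_contra hno
    push_neg at hno
    apply hnr
    refine ⟨fun n => if n % 2 = 0 then g (n/2) else y₀, ?_, ?_⟩
    · have h := Computable.cond
        (Primrec.to_comp (Primrec.eq.comp (Primrec.nat_mod.comp .id (.const 2)) (.const 0)).decide)
        (hg.1.comp (Primrec.to_comp (Primrec.nat_div.comp .id (.const 2))))
        (Computable.const y₀)
      convert h using 2 with n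
      simp [Bool.cond_decide]
    · intro a b
      rcases Nat.even_or_odd a with ⟨x, rfl⟩ | ⟨x, rfl⟩ <;>
        rcases Nat.even_or_odd b with ⟨y, rfl⟩ | ⟨y, rfl⟩
      · have hax : (x+x) % 2 = 0 := by omega
        have hax2 : (x+x) / 2 = x := by omega
        have hby : (y+y) % 2 = 0 := by omega
        have hby2 : (y+y) / 2 = y := by omega
        simp only [hax, hby, hax2, hby2, if_pos rfl]
        constructor
        · rintro (⟨a,b,ha,hb,h⟩|⟨a,b,ha,hb,h⟩)
          · obtain rfl : a = x := by omega
            obtain rfl : b = y := by omega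
            exact (hg.2 _ _).mp h
          · omega
        · intro h
          exact Or.inl ⟨x, y, by omega, by omega, (hg.2 x y).mpr h⟩
      · have hax : (x+x) % 2 = 0 := by omega
        have hax2 : (x+x) / 2 = x := by omega
        have hby : (2*y+1) % 2 ≠ 0 := by omega
        simp only [hax, hax2, if_pos rfl, if_neg hby]
        constructor
        · rintro (⟨a,b,ha,hb,h⟩|⟨a,b,ha,hb,h⟩) <;> omega
        · intro h; exact absurd h (hno x)
      · have hax : (2*x+1) % 2 ≠ 0 := by omega
        have hby : (y+y) % 2 = 0 := by omega
        have hby2 : (y+y) / 2 = y := by omega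
        simp only [hby, hby2, if_pos rfl, if_neg hax]
        constructor
        · rintro (⟨a,b,ha,hb,h⟩|⟨a,b,ha,hb,h⟩) <;> omega
        · intro h; exact absurd (hR.1.symm h) (hno y)
      · have hax : (2*x+1) % 2 ≠ 0 := by omega
        have hby : (2*y+1) % 2 ≠ 0 := by omega
        simp only [if_neg hax, if_neg hby]
        constructor
        · intro _; exact hR.1.refl y₀
        · intro _; exact Or.inr ⟨x, y, rfl, rfl, trivial⟩
end

section
/- If C is a Π⁰₁ equivalence relation on ℕ with infinitely many equivalence classes, then the identity relation Id on ℕ is computably reducible to C. -/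
namespace Stmt1Aux

open Nat.Partrec (Code)
open Nat.Partrec.Code

/-- Stage-wise check: at stage `m.unpair.2`, the point `m.unpair.1` is enumerated as
non-equivalent to every element of `l`. -/
def chkF (c : Code) (l : List ℕ) (m : ℕ) : Bool :=
  l.foldr (fun y b => (evaln m.unpair.2 c (Nat.pair m.unpair.1 y)).isSome && b) true

theorem chkF_iff {c : Code} {l : List ℕ} {m : ℕ} :
    chkF c l m = true ↔
      ∀ y ∈ l, (evaln m.unpair.2 c (Nat.pair m.unpair.1 y)).isSome = true := by
  induction l with
  | nil => simp [chkF]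
  | cons a t ih =>
    simp only [chkF, List.foldr_cons, Bool.and_eq_true, List.mem_cons] at *
    constructor
    · rintro ⟨h1, h2⟩ y (rfl | hy)
      · exact h1
      · exact ih.1 h2 y hy
    · intro h
      exact ⟨h a (Or.inl rfl), ih.2 fun y hy => h y (Or.inr hy)⟩

theorem chkF_primrec (c : Code) : Primrec₂ (chkF c) := by
  have he : Primrec fun a : (List ℕ × ℕ) × ℕ × Bool =>
      evaln a.1.2.unpair.2 c (Nat.pair a.1.2.unpair.1 a.2.1) :=
    primrec_evaln.comp <|
      Primrec.pair
        (Primrec.pair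
          ((Primrec.snd.comp Primrec.unpair).comp (Primrec.snd.comp Primrec.fst))
          (Primrec.const c))
        (Primrec₂.natPair.comp
          ((Primrec.fst.comp Primrec.unpair).comp (Primrec.snd.comp Primrec.fst))
          (Primrec.fst.comp Primrec.snd))
  have h1 : Primrec fun a : (List ℕ × ℕ) × ℕ × Bool =>
      ((evaln a.1.2.unpair.2 c (Nat.pair a.1.2.unpair.1 a.2.1)).isSome && a.2.2) := by
    have hc := Primrec.cond (Primrec.option_isSome.comp he)
      (Primrec.snd.comp Primrec.snd) (Primrec.const false)
    refine hc.of_eq fun a => ?_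
    cases hb : (evaln a.1.2.unpair.2 c (Nat.pair a.1.2.unpair.1 a.2.1)).isSome <;> simp [hb]
  exact Primrec.list_foldr Primrec.fst (Primrec.const true) h1.to₂

end Stmt1Aux

/-- If `C` is a Π⁰₁ equivalence relation with infinitely many classes, then `Id ≤ C`. -/
theorem stmt1 (C : ℕ → ℕ → Prop) (hC : Equivalence C) (hPi : Pi01 C)
    (hInf : InfiniteClasses C) :
    Reduces (fun x y => x = y) C := by
  classical
  open Nat.Partrec.Code in
  obtain ⟨c, hc⟩ : ∃ c : Nat.Partrec.Code, ∀ a b : ℕ,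
      ¬ C a b ↔ ∃ k, (evaln k c (Nat.pair a b)).isSome = true := by
    obtain ⟨c, hc⟩ := Nat.Partrec.Code.exists_code.1 hPi
    refine ⟨c, fun a b => ?_⟩
    have h1 : eval c (Nat.pair a b) =
        Part.bind ((Encodable.decode (α := ℕ × ℕ) (Nat.pair a b) : Option (ℕ × ℕ)) : Part (ℕ × ℕ))
          (fun p : ℕ × ℕ =>
            (Part.assert (¬ C p.1 p.2) fun _ => Part.some ()).map Encodable.encode) :=
      congrFun hc _
    have hdec : Encodable.decode (α := ℕ × ℕ) (Nat.pair a b) = some (a, b) := by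
      have h : Nat.pair a b = Encodable.encode (a, b) := rfl
      rw [h, Encodable.encodek]
    rw [hdec] at h1
    constructor
    · intro h
      have hmem : (Encodable.encode () : ℕ) ∈ eval c (Nat.pair a b) := by
        rw [h1]
        simp [Part.mem_bind_iff, Part.mem_assert_iff, h]
        exact ⟨(), rfl⟩
      obtain ⟨k, hk⟩ := evaln_complete.1 hmem
      exact ⟨k, Option.isSome_iff_exists.2 ⟨_, hk⟩⟩
    · rintro ⟨k, hk⟩
      obtain ⟨x, hx⟩ := Option.isSome_iff_exists.1 hk
      have hmem : x ∈ eval c (Nat.pair a b) := evaln_complete.2 ⟨k, hx⟩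
      rw [h1] at hmem
      simp [Part.mem_bind_iff, Part.mem_assert_iff] at hmem
      exact hmem.1
  have hmono : ∀ {k k' : ℕ} {x : ℕ}, k ≤ k' →
      (Nat.Partrec.Code.evaln k c x).isSome = true →
      (Nat.Partrec.Code.evaln k' c x).isSome = true := by
    intro k k' x hkk h
    obtain ⟨v, hv⟩ := Option.isSome_iff_exists.1 h
    exact Option.isSome_iff_exists.2 ⟨v, Nat.Partrec.Code.evaln_mono hkk hv⟩
  have hex : ∀ l : List ℕ, ∃ m, Stmt1Aux.chkF c l m = true := by
    intro l
    obtain ⟨x, hx⟩ := hInf l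
    have huni : ∀ t : List ℕ,
        (∀ y ∈ t, ∃ k, (Nat.Partrec.Code.evaln k c (Nat.pair x y)).isSome = true) →
        ∃ s, ∀ y ∈ t, (Nat.Partrec.Code.evaln s c (Nat.pair x y)).isSome = true := by
      intro t
      induction t with
      | nil => intro _; exact ⟨0, by simp⟩
      | cons a t ih =>
        intro h
        obtain ⟨k1, hk1⟩ := h a List.mem_cons_self
        obtain ⟨s, hs⟩ := ih fun y hy => h y (List.mem_cons_of_mem _ hy)
        refine ⟨max k1 s, fun y hy => ?_⟩
        rcases List.mem_cons.1 hy with rfl | hy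
        · exact hmono (le_max_left _ _) hk1
        · exact hmono (le_max_right _ _) (hs y hy)
    obtain ⟨s, hs⟩ := huni l fun y hy => (hc x y).1 (hx y hy)
    refine ⟨Nat.pair x s, Stmt1Aux.chkF_iff.2 fun y hy => ?_⟩
    simpa using hs y hy
  -- the reduction
  let nx : List ℕ → ℕ := fun l => Nat.find (hex l)
  let L : ℕ → List ℕ := fun n => Nat.rec [] (fun _ ih => ih ++ [(nx ih).unpair.1]) n
  let f : ℕ → ℕ := fun n => (nx (L n)).unpair.1
  have hg : ∀ l : List ℕ, ∀ y ∈ l, ¬ C (nx l).unpair.1 y := by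
    intro l y hy
    have h1 : Stmt1Aux.chkF c l (nx l) = true := Nat.find_spec (hex l)
    exact (hc _ _).2 ⟨_, Stmt1Aux.chkF_iff.1 h1 y hy⟩
  have hLs : ∀ n, L (n + 1) = L n ++ [f n] := fun n => rfl
  have hmem : ∀ i j, i < j → f i ∈ L j := by
    intro i j hij
    induction j with
    | zero => omega
    | succ j ih =>
      rw [hLs]
      rcases Nat.lt_succ_iff_lt_or_eq.1 hij with h | h
      · exact List.mem_append_left _ (ih h)
      · subst h; exact List.mem_append_right _ (List.mem_singleton.2 rfl)
  have hne : ∀ i j, i < j → ¬ C (f j) (f i) := fun i j hij => hg (L j) (f i) (hmem i j hij)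
  have hunpair1 : Computable fun n : ℕ => n.unpair.1 :=
    (Primrec.fst.comp Primrec.unpair).to_comp
  have hnx : Computable nx := by
    have hchk : Computable₂ (Stmt1Aux.chkF c) := (Stmt1Aux.chkF_primrec c).to_comp
    have hp : Partrec fun l : List ℕ => Nat.rfind fun m => Part.some (Stmt1Aux.chkF c l m) :=
      Partrec.rfind hchk.partrec₂
    refine hp.of_eq fun l => ?_
    show _ = Part.some (nx l)
    rw [Part.eq_some_iff]
    refine Nat.mem_rfind.2 ⟨?_, ?_⟩
    · exact Part.mem_some_iff.2 (Nat.find_spec (hex l)).symm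
    · intro m hm
      refine Part.mem_some_iff.2 ?_
      have := Nat.find_min (hex l) hm
      exact (Bool.not_eq_true _ ▸ this : _).symm
  have hLc : Computable L := by
    have h := Computable.nat_rec (f := fun n : ℕ => n) (g := fun _ : ℕ => ([] : List ℕ))
      (h := fun (_ : ℕ) (p : ℕ × List ℕ) => p.2 ++ [(nx p.2).unpair.1])
      Computable.id (Computable.const [])
      (Computable.list_concat.comp (Computable.snd.comp Computable.snd)
        ((hunpair1.comp (hnx.comp (Computable.snd.comp Computable.snd)))) |>.to₂)
    exact h.of_eq fun n => rfl
  have hfc : Computable f := hunpair1.comp (hnx.comp hLc)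
  refine ⟨f, hfc, fun x y => ?_⟩
  constructor
  · rintro rfl; exact hC.refl _
  · intro h
    by_contra hxy
    rcases Nat.lt_or_ge x y with h1 | h1
    · exact hne x y h1 (hC.symm h)
    · exact hne y x (by omega) h
end

section
/- Every dark ceer is co-ceer-resistant: if X is a ceer with infinitely many classes such that Id is not computably reducible to X, and C is any Π⁰₁ equivalence relation with infinitely many classes, then there exist x, y with x X y but not x C y. -/
open Nat.Partrec (Code)
open Nat.Partrec.Code

-- auxiliary: from a Π⁰₁ relation with infinitely many classes, get a computable
-- sequence of pairwise inequivalent elements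
theorem exists_comp_transversal (C : ℕ → ℕ → Prop)
    (hPi : Partrec fun p : ℕ × ℕ => Part.assert (¬ C p.1 p.2) fun _ => Part.some ())
    (hCInf : ∀ l : List ℕ, ∃ x, ∀ y ∈ l, ¬ C x y) :
    ∃ f : ℕ → ℕ, Computable f ∧ ∀ m n, m < n → ¬ C (f n) (f m) := by
  -- pack into a ℕ →. ℕ function
  set H : ℕ →. ℕ := fun n =>
    (Part.assert (¬ C n.unpair.1 n.unpair.2) fun _ => Part.some ()).map fun _ => 0 with hH
  have hHpart : Partrec H :=
    (hPi.comp Primrec.unpair.to_comp).map ((Computable.const 0).comp Computable.fst).to₂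
  obtain ⟨c, hc⟩ := Code.exists_code.1 (Partrec.nat_iff.1 hHpart)
  have hdom : ∀ x y : ℕ, ¬ C x y ↔ ∃ k, (evaln k c (Nat.pair x y)).isSome := by
    intro x y
    have h1 : (H (Nat.pair x y)).Dom ↔ ¬ C x y := by
      simp only [hH, Part.map_Dom, Nat.unpair_pair]
      exact ⟨fun ⟨h, _⟩ => by simpa using h, fun h => ⟨by simpa using h, trivial⟩⟩
    rw [← h1, ← hc]
    constructor
    · intro h
      obtain ⟨v, hv⟩ := Part.dom_iff_mem.1 h
      obtain ⟨k, hk⟩ := evaln_complete.1 hv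
      exact ⟨k, Option.isSome_iff_exists.2 ⟨v, hk⟩⟩
    · rintro ⟨k, hk⟩
      obtain ⟨v, hv⟩ := Option.isSome_iff_exists.1 hk
      exact Part.dom_iff_mem.2 ⟨v, evaln_complete.2 ⟨k, hv⟩⟩
  -- decidable stage-bounded test
  set Q : List ℕ → ℕ → Bool := fun l t =>
    l.foldr (fun y b => (evaln t.unpair.2 c (Nat.pair t.unpair.1 y)).isSome && b) true with hQ
  have hQiff : ∀ l t, Q l t = true ↔
      ∀ y ∈ l, (evaln t.unpair.2 c (Nat.pair t.unpair.1 y)).isSome := by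
    intro l t
    induction l with
    | nil => simp [hQ]
    | cons a l ih => simp [hQ] at ih ⊢; tauto
  have hQex : ∀ l, ∃ t, Q l t = true := by
    intro l
    obtain ⟨x, hx⟩ := hCInf l
    have : ∃ k, ∀ y ∈ l, (evaln k c (Nat.pair x y)).isSome := by
      induction l with
      | nil => exact ⟨0, by simp⟩
      | cons a l ih =>
        obtain ⟨k1, hk1⟩ := ih fun y hy => hx y (List.mem_cons_of_mem _ hy)
        obtain ⟨k2, hk2⟩ := (hdom x a).1 (hx a (List.mem_cons_self))
        refine ⟨max k1 k2, ?_⟩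
        intro y hy
        rcases List.mem_cons.1 hy with rfl | hy
        · obtain ⟨v, hv⟩ := Option.isSome_iff_exists.1 hk2
          exact Option.isSome_iff_exists.2 ⟨v, evaln_mono (le_max_right _ _) hv⟩
        · obtain ⟨v, hv⟩ := Option.isSome_iff_exists.1 (hk1 y hy)
          exact Option.isSome_iff_exists.2 ⟨v, evaln_mono (le_max_left _ _) hv⟩
    obtain ⟨k, hk⟩ := this
    refine ⟨Nat.pair x k, (hQiff _ _).2 ?_⟩
    simpa using hk
  -- Q is primrec
  have hQprim : Primrec₂ Q := by
    have hs : Primrec fun q : (List ℕ × ℕ) × ℕ × Bool => q.1.2.unpair.2 :=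
      Primrec.snd.comp (Primrec.unpair.comp (Primrec.snd.comp Primrec.fst))
    have hx : Primrec fun q : (List ℕ × ℕ) × ℕ × Bool => q.1.2.unpair.1 :=
      Primrec.fst.comp (Primrec.unpair.comp (Primrec.snd.comp Primrec.fst))
    have hn : Primrec fun q : (List ℕ × ℕ) × ℕ × Bool => Nat.pair q.1.2.unpair.1 q.2.1 :=
      Primrec₂.natPair.comp hx (Primrec.fst.comp Primrec.snd)
    have hev : Primrec fun q : (List ℕ × ℕ) × ℕ × Bool =>
        (evaln q.1.2.unpair.2 c (Nat.pair q.1.2.unpair.1 q.2.1)).isSome :=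
      Primrec.option_isSome.comp
        (primrec_evaln.comp ((hs.pair (Primrec.const c)).pair hn))
    have h1 : Primrec fun q : (List ℕ × ℕ) × ℕ × Bool =>
        (evaln q.1.2.unpair.2 c (Nat.pair q.1.2.unpair.1 q.2.1)).isSome && q.2.2 :=
      Primrec.and.comp hev (Primrec.snd.comp Primrec.snd)
    exact Primrec.list_foldr Primrec.fst (Primrec.const true) h1.to₂
  -- unbounded search: least t with Q l t
  set p : List ℕ → ℕ →. Bool := fun l t => Part.some (Q l t) with hp
  have hpdom : ∀ l, (Nat.rfind (p l)).Dom := by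
    intro l
    obtain ⟨t, ht⟩ := hQex l
    exact Nat.rfind_dom.2 ⟨t, by simp [hp, ht], fun _ => trivial⟩
  set next : List ℕ → ℕ := fun l => ((Nat.rfind (p l)).get (hpdom l)).unpair.1 with hnext
  have hnextC : Computable next := by
    have h2 : Partrec fun l => Nat.rfind (p l) :=
      Partrec.rfind (hQprim.to_comp.partrec₂)
    have h3 : Computable fun l => (Nat.rfind (p l)).get (hpdom l) :=
      (h2.of_eq fun l => (Part.some_get (hpdom l)).symm)
    exact Primrec.fst.to_comp.comp (Primrec.unpair.to_comp.comp h3)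
  have hnextP : ∀ l, ∀ y ∈ l, ¬ C (next l) y := by
    intro l y hy
    have hmem := Part.get_mem (hpdom l)
    have hspec := Nat.rfind_spec hmem
    simp only [hp, Part.mem_some_iff] at hspec
    have := (hQiff l _).1 hspec.symm y hy
    exact (hdom _ y).2 ⟨_, this⟩
  -- the recursive list of chosen elements
  set L : ℕ → List ℕ := fun n => Nat.rec [] (fun _ ih => ih ++ [next ih]) n with hL
  have hLC : Computable L := by
    have := Computable.nat_rec (Computable.id (α := ℕ)) (Computable.const ([] : List ℕ))
      ((Computable.list_concat.comp (Computable.snd.comp Computable.snd)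
        (hnextC.comp (Computable.snd.comp Computable.snd))).to₂
        (α := ℕ) (β := ℕ × List ℕ))
    exact this
  set f : ℕ → ℕ := fun n => next (L n) with hf
  have hmemL : ∀ m n, m < n → f m ∈ L n := by
    intro m n hmn
    induction n with
    | zero => omega
    | succ n ih =>
      have : L (n+1) = L n ++ [next (L n)] := rfl
      rw [this]
      rcases Nat.lt_succ_iff_lt_or_eq.1 hmn with h | rfl
      · exact List.mem_append_left _ (ih h)
      · exact List.mem_append_right _ (by simp [hf])
  exact ⟨f, hnextC.comp hLC, fun m n hmn => hnextP (L n) (f m) (hmemL m n hmn)⟩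

/-- Every dark ceer is co-ceer-resistant. -/
theorem stmt2 (X : ℕ → ℕ → Prop) (hX : Ceer X) (hInf : InfiniteClasses X)
    (hdark : ¬ Reduces (fun x y => x = y) X)
    (C : ℕ → ℕ → Prop) (hC : Equivalence C) (hPi : Pi01 C)
    (hCInf : InfiniteClasses C) :
    ∃ x y, X x y ∧ ¬ C x y := by
  by_contra hcon
  push_neg at hcon
  obtain ⟨f, hfC, hfP⟩ := exists_comp_transversal C hPi hCInf
  apply hdark
  refine ⟨f, hfC, fun x y => ⟨?_, ?_⟩⟩
  · rintro rfl; exact hX.1.refl _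
  · intro hXf
    by_contra hne
    have hCf := hcon _ _ hXf
    rcases Nat.lt_or_ge x y with h | h
    · exact hfP x y h (hC.symm hCf)
    · exact hfP y x (lt_of_le_of_ne h (Ne.symm hne)) hCf
end

section
/- If X is a co-ceer-resistant ceer and f is a computable reduction of X ⊕ Y to X ⊕ Y, then the Π⁰₁ equivalence relation ∼ᶠ defined by n ∼ᶠ m iff for all k, f⁽ᵏ⁾(2n) is even ↔ f⁽ᵏ⁾(2m) is even, has only finitely many equivalence classes. -/
private lemma iter_computable {f : ℕ → ℕ} (hf : Computable f) :
    Computable (fun p : ℕ × ℕ => f^[p.2] p.1) := by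
  have H : Computable fun p : ℕ × ℕ =>
      Nat.rec (motive := fun _ => ℕ) p.1
        (fun y IH => (fun (_ : ℕ × ℕ) (q : ℕ × ℕ) => f q.2) p (y, IH)) p.2 :=
    Computable.nat_rec Computable.snd Computable.fst
      ((hf.comp (Computable.snd.comp Computable.snd)).to₂)
  refine H.of_eq fun p => ?_
  induction p.2 with
  | zero => simp
  | succ k ih => simp only [Function.iterate_succ_apply', ← ih]

private lemma simF_equiv (f : ℕ → ℕ) : Equivalence (simF f) :=
  ⟨fun _ _ => Iff.rfl, fun h k => (h k).symm, fun h h' k => (h k).trans (h' k)⟩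

private lemma simF_pi01 {f : ℕ → ℕ} (hf : Computable f) : Pi01 (simF f) := by
  set G : ℕ × ℕ → ℕ → Bool :=
    fun a k => !((f^[k] (2*a.1)) % 2 == (f^[k] (2*a.2)) % 2) with hGdef
  have hu : Computable fun q : (ℕ × ℕ) × ℕ => f^[q.2] (2*q.1.1) := by
    have h2 : Computable (fun q : (ℕ × ℕ) × ℕ => (2*q.1.1, q.2)) :=
      Computable.pair
        ((Primrec.nat_mul.comp (Primrec.const 2) (Primrec.fst.comp Primrec.fst)).to_comp)
        Computable.snd
    exact Computable.comp (g := fun q : (ℕ × ℕ) × ℕ => (2*q.1.1, q.2))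
      (iter_computable hf) h2
  have hv : Computable fun q : (ℕ × ℕ) × ℕ => f^[q.2] (2*q.1.2) := by
    have h2 : Computable (fun q : (ℕ × ℕ) × ℕ => (2*q.1.2, q.2)) :=
      Computable.pair
        ((Primrec.nat_mul.comp (Primrec.const 2) (Primrec.snd.comp Primrec.fst)).to_comp)
        Computable.snd
    exact Computable.comp (g := fun q : (ℕ × ℕ) × ℕ => (2*q.1.2, q.2))
      (iter_computable hf) h2
  have hb : Computable fun p : ℕ × ℕ => !(p.1 % 2 == p.2 % 2) :=
    (Primrec.not.comp
      (Primrec.beq.comp (Primrec.nat_mod.comp Primrec.fst (Primrec.const 2))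
        (Primrec.nat_mod.comp Primrec.snd (Primrec.const 2)))).to_comp
  have hG : Computable₂ G := (hb.comp (hu.pair hv)).to₂
  have hr : Partrec fun a : ℕ × ℕ => Nat.rfind (fun k => (Part.some (G a k))) :=
    Partrec.rfind hG.partrec₂
  refine hr.dom_re.of_eq fun a => ?_
  refine Nat.rfind_dom.trans ?_
  constructor
  · rintro ⟨n, hn, -⟩ hsim
    have h1 : f^[n] (2*a.1) % 2 ≠ f^[n] (2*a.2) % 2 := by
      simpa [hGdef] using hn
    have h2 := hsim n
    rw [Nat.even_iff, Nat.even_iff] at h2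
    obtain ⟨mp, mpr⟩ := h2
    apply h1
    rcases Nat.mod_two_eq_zero_or_one (f^[n] (2*a.1)) with h | h
    · rw [h, mp h]
    · rcases Nat.mod_two_eq_zero_or_one (f^[n] (2*a.2)) with h' | h'
      · have := mpr h'; omega
      · rw [h, h']
  · intro h
    simp only [simF, not_forall] at h
    obtain ⟨k, hk⟩ := h
    refine ⟨k, ?_, fun _ => trivial⟩
    have : f^[k] (2*a.1) % 2 ≠ f^[k] (2*a.2) % 2 := by
      intro heq
      exact hk (by rw [Nat.even_iff, Nat.even_iff, heq])
    simpa [hGdef] using this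

/-- If `X` is a co-ceer-resistant ceer and `f` reduces `X ⊕ Y` to itself, then `∼ᶠ`
has only finitely many classes. -/
theorem stmt3 (X Y : ℕ → ℕ → Prop) (hX : Ceer X) (hY : Ceer Y)
    (hccr : CoCeerResistant X) (f : ℕ → ℕ)
    (hf : CReduction f (join X Y) (join X Y)) :
    FiniteClasses (simF f) := by
  by_contra hfin
  have hinf : InfiniteClasses (simF f) := by
    intro l
    by_contra h
    push_neg at h
    exact hfin ⟨l, h⟩
  obtain ⟨x, y, hxy, hnc⟩ := hccr (simF f) (simF_equiv f) (simF_pi01 hf.1) hinf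
  apply hnc
  have hj : ∀ k, join X Y (f^[k] (2*x)) (f^[k] (2*y)) := by
    intro k
    induction k with
    | zero => exact Or.inl ⟨x, y, rfl, rfl, hxy⟩
    | succ k ih =>
        rw [Function.iterate_succ_apply', Function.iterate_succ_apply']
        exact (hf.2 _ _).mp ih
  intro k
  rcases hj k with ⟨u, v, ha, hb, -⟩ | ⟨u, v, ha, hb, -⟩ <;>
    rw [ha, hb] <;> simp [Nat.even_add_one, parity_simps]
end

section
/- Let f : X ⊕ Y → X ⊕ Y be a computable reduction and define ∼ᶠ by n ∼ᶠ m iff for all k, f⁽ᵏ⁾(2n) is even ↔ f⁽ᵏ⁾(2m) is even. If ∼ᶠ has only finitely many equivalence classes, then every ∼ᶠ-class, viewed as an infinite sequence τ ∈ {X,Y}^ω where τ(k) records the parity of f⁽ᵏ⁾(2n), is eventually periodic. -/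
lemma bodd_congr {a b : ℕ} (h : Even a ↔ Even b) : a.bodd = b.bodd := by
  have hm : a % 2 = b % 2 := by
    rcases Nat.even_or_odd a with h1 | h1
    · have h2 := h.mp h1
      rw [Nat.even_iff] at h1 h2; omega
    · have h2 : ¬ Even b := fun hb => (Nat.not_even_iff_odd.mpr h1) (h.mpr hb)
      rw [Nat.not_even_iff] at h2; rw [Nat.odd_iff] at h1; omega
  rw [Nat.mod_two_of_bodd, Nat.mod_two_of_bodd] at hm
  cases hx : a.bodd <;> cases hy : b.bodd <;> simp_all

/-- If `∼ᶠ` has finitely many classes, every class's parity sequence is eventually periodic. -/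
theorem stmt4 (X Y : ℕ → ℕ → Prop) (hX : Ceer X) (hY : Ceer Y) (f : ℕ → ℕ)
    (hf : CReduction f (join X Y) (join X Y))
    (hfin : FiniteClasses (simF f)) :
    ∀ n, EventuallyPeriodic (fun k => (f^[k] (2*n)).bodd) := by
  intro n
  by_cases hc : ∃ N, ∀ k, N ≤ k → ¬ Even (f^[k] (2*n))
  · obtain ⟨N, hN⟩ := hc
    refine ⟨N, 1, one_pos, fun k hk => ?_⟩
    have h1 := hN (k+1) (by omega)
    have h2 := hN k hk
    exact bodd_congr (by tauto)
  · push_neg at hc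
    obtain ⟨l, hl⟩ := hfin
    -- build strictly increasing sequence of indices with even iterate
    let K : ℕ → ℕ := fun i => Nat.rec (hc 0).choose (fun _ prev => (hc (prev+1)).choose) i
    have hK0 : K 0 = (hc 0).choose := rfl
    have hKs : ∀ i, K (i+1) = (hc (K i + 1)).choose := fun i => rfl
    have hKev : ∀ i, Even (f^[K i] (2*n)) := by
      intro i
      cases i with
      | zero => exact (hc 0).choose_spec.2
      | succ j => exact (hc (K j + 1)).choose_spec.2
    have hKmono : StrictMono K := by
      apply strictMono_nat_of_lt_succ
      intro i
      have := (hc (K i + 1)).choose_spec.1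
      rw [hKs]; omega
    -- m i : half of the even iterate
    have hm : ∀ i, 2 * ((f^[K i] (2*n)) / 2) = f^[K i] (2*n) := by
      intro i
      obtain ⟨c, hcc⟩ := hKev i
      omega
    set m : ℕ → ℕ := fun i => (f^[K i] (2*n)) / 2 with hmdef
    have hrep : ∀ i, (hl (m i)).choose ∈ l ∧ simF f (m i) ((hl (m i)).choose) := by
      intro i
      exact (hl (m i)).choose_spec
    -- pigeonhole: two indices with the same representative
    have hcard : (l.toFinset.card) < (Finset.range (l.toFinset.card + 1)).card := by
      simp
    obtain ⟨i, hi, j, hj, hij, heq⟩ :=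
      Finset.exists_ne_map_eq_of_card_lt_of_maps_to hcard
        (f := fun i => (hl (m i)).choose)
        (fun i _ => List.mem_toFinset.mpr (hrep i).1)
    -- WLOG i < j
    wlog hlt : i < j generalizing i j
    · exact this j hj i hi hij.symm heq.symm (by omega)
    have hsim : simF f (m i) (m j) := by
      intro k
      exact ((hrep i).2 k).trans (by rw [heq]; exact ((hrep j).2 k).symm)
    refine ⟨K i, K j - K i, by have := hKmono hlt; omega, fun k hk => ?_⟩
    have hKij := hKmono hlt
    have hiter : ∀ t jj, f^[t] (2 * m jj) = f^[t + K jj] (2*n) := by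
      intro t jj
      rw [hm jj, ← Function.iterate_add_apply]
    have hsk := hsim (k - K i)
    rw [hiter, hiter] at hsk
    have e1 : k - K i + K i = k := by omega
    have e2 : k - K i + K j = k + (K j - K i) := by omega
    rw [e1, e2] at hsk
    exact bodd_congr hsk.symm
end

section
/- Every dark ceer is hereditarily self-full: if X is a ceer with infinitely many classes such that Id is not computably reducible to X, then for every self-full ceer Y, X ⊕ Y is self-full. -/
section Stmt6Aux

private theorem comp_iterate {f : ℕ → ℕ} (hf : Computable f) :
    Computable fun p : ℕ × ℕ => f^[p.2] p.1 := by
  have h := Computable.nat_rec (Computable.snd : Computable fun p : ℕ × ℕ => p.2)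
      (Computable.fst : Computable fun p : ℕ × ℕ => p.1)
      ((hf.comp (Computable.snd.comp Computable.snd)).to₂ :
        Computable₂ fun (_ : ℕ × ℕ) (q : ℕ × ℕ) => f q.2)
  refine h.of_eq fun p => ?_
  obtain ⟨c, n⟩ := p
  induction n with
  | zero => rfl
  | succ n ih =>
      show f (Nat.rec c (fun _ IH => f IH) n) = f^[n+1] c
      rw [Function.iterate_succ_apply', ← ih]

end Stmt6Aux

/-- Every dark ceer is hereditarily self-full. -/
theorem stmt6 (X : ℕ → ℕ → Prop) (hX : Ceer X) (hInf : InfiniteClasses X)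
    (hdark : ¬ Reduces (fun x y => x = y) X) :
    ∀ Y : ℕ → ℕ → Prop, Ceer Y → SelfFull Y → SelfFull (join X Y) := by
  intro Y hY hYsf
  intro f hf b
  by_contra hmiss
  push_neg at hmiss
  obtain ⟨hfc, hfred⟩ := hf
  have hXe := hX.1
  have hYe := hY.1
  -- basic facts about the join
  have Jsymm : ∀ {a c : ℕ}, join X Y a c → join X Y c a := by
    rintro a c (⟨x, y, hx, hy, h⟩ | ⟨x, y, hx, hy, h⟩)
    · exact Or.inl ⟨y, x, hy, hx, hXe.symm h⟩
    · exact Or.inr ⟨y, x, hy, hx, hYe.symm h⟩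
  have Jpar : ∀ {a c : ℕ}, join X Y a c → a % 2 = c % 2 := by
    rintro a c (⟨x, y, hx, hy, _⟩ | ⟨x, y, hx, hy, _⟩) <;> omega
  have Jodd : ∀ u v : ℕ, join X Y (2*u+1) (2*v+1) ↔ Y u v := by
    intro u v
    constructor
    · rintro (⟨x, y, hx, hy, h⟩ | ⟨x, y, hx, hy, h⟩)
      · exfalso; omega
      · have hxu : x = u := by omega
        have hyv : y = v := by omega
        subst hxu; subst hyv; exact h
    · intro h; exact Or.inr ⟨u, v, rfl, rfl, h⟩
  -- transfer along iterates of f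
  have Jiter : ∀ (m a c : ℕ), join X Y a c ↔ join X Y (f^[m] a) (f^[m] c) := by
    intro m
    induction m with
    | zero => intro a c; simp
    | succ n ih =>
        intro a c
        rw [Function.iterate_succ_apply', Function.iterate_succ_apply']
        exact (ih a c).trans (hfred _ _)
  -- computability helpers
  have hFit : Computable fun p : ℕ × ℕ => f^[p.2] p.1 := comp_iterate hfc
  have hdiv2 : Computable fun n : ℕ => n / 2 :=
    Primrec.to_comp (Primrec.nat_div.comp Primrec.id (Primrec.const 2))
  -- a fully even orbit which never collapses to its start would reduce Id to X
  have hIdX : ∀ c₀ : ℕ, (∀ i, (f^[i] c₀) % 2 = 0) →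
      (∀ m, 1 ≤ m → ¬ join X Y c₀ (f^[m] c₀)) → False := by
    intro c₀ hev hnc
    apply hdark
    refine ⟨fun i => (f^[i] c₀) / 2, ?_, ?_⟩
    · exact hdiv2.comp (hFit.comp ((Computable.const c₀).pair Computable.id))
    · have key : ∀ i j : ℕ, i < j → X ((f^[i] c₀)/2) ((f^[j] c₀)/2) → False := by
        intro i j hij hXij
        have h2i : 2 * ((f^[i] c₀)/2) = f^[i] c₀ := by have := hev i; omega
        have h2j : 2 * ((f^[j] c₀)/2) = f^[j] c₀ := by have := hev j; omega
        have hJij : join X Y (f^[i] c₀) (f^[j] c₀) :=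
          Or.inl ⟨(f^[i] c₀)/2, (f^[j] c₀)/2, h2i.symm, h2j.symm, hXij⟩
        have e : f^[i] (f^[j-i] c₀) = f^[j] c₀ := by
          rw [← Function.iterate_add_apply]; congr 1; omega
        have hbase : join X Y c₀ (f^[j-i] c₀) := by
          refine (Jiter i _ _).mpr ?_
          rw [e]; exact hJij
        exact hnc (j - i) (by omega) hbase
      intro i j
      constructor
      · rintro rfl; exact hXe.refl _
      · intro hXij
        by_contra hne
        rcases Nat.lt_or_ge i j with h | h
        · exact key i j h hXij
        · have : j < i := by omega
          exact key j i this (hXe.symm hXij)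
  -- every odd point returns to odd parity at some positive iterate
  have hstar : ∀ y : ℕ, ∃ k, (f^[k+1] (2*y+1)) % 2 = 1 := by
    intro y
    by_contra h
    push_neg at h
    have hev : ∀ i, (f^[i] (f (2*y+1))) % 2 = 0 := by
      intro i
      have h' := h i
      rw [Function.iterate_succ_apply] at h'
      omega
    refine hIdX (f (2*y+1)) hev ?_
    intro m hm hJm
    have e : f^[m] (f (2*y+1)) = f (f^[m] (2*y+1)) := by
      rw [← Function.iterate_succ_apply, Function.iterate_succ_apply']
    rw [e] at hJm
    have hJ0 : join X Y (2*y+1) (f^[m] (2*y+1)) := (hfred _ _).mpr hJm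
    have hp := Jpar hJ0
    have h' := h (m - 1)
    rw [(by omega : m - 1 + 1 = m)] at h'
    omega
  -- the missed class is not in the range of any positive iterate
  have hbm : ∀ (a m : ℕ), 1 ≤ m → ¬ join X Y b (f^[m] a) := by
    intro a m hm hJm
    have e : f^[m] a = f (f^[m-1] a) := by
      conv_lhs => rw [show m = (m-1)+1 by omega]
      rw [Function.iterate_succ_apply']
    rw [e] at hJm
    exact hmiss (f^[m-1] a) (Jsymm hJm)
  -- the orbit of b must contain an odd point
  have hjex : ∃ j, (f^[j] b) % 2 = 1 := by
    by_contra h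
    push_neg at h
    refine hIdX b (fun i => by have := h i; omega) ?_
    intro m hm
    exact hbm b m hm
  -- first odd point on the orbit of b
  have hodd := Nat.find_spec hjex
  have hmin : ∀ i, i < Nat.find hjex → (f^[i] b) % 2 = 0 := by
    intro i hi
    have := Nat.find_min hjex hi
    omega
  set j1 := Nat.find hjex with hj1def
  set w0 : ℕ := (f^[j1] b) / 2 with hw0def
  have hw0 : 2 * w0 + 1 = f^[j1] b := by
    have := Nat.div_add_mod (f^[j1] b) 2
    omega
  -- the self-reduction g of Y : push to the first odd iterate
  set K : ℕ → ℕ := fun y => Nat.find (hstar y) with hKdef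
  set g : ℕ → ℕ := fun y => (f^[K y + 1] (2*y+1)) / 2 with hgdef
  have hgodd : ∀ y, (f^[K y + 1] (2*y+1)) % 2 = 1 := fun y => Nat.find_spec (hstar y)
  have hKmin : ∀ y k, k < K y → (f^[k+1] (2*y+1)) % 2 = 0 := by
    intro y k hk
    have := Nat.find_min (hstar y) hk
    omega
  have hg2 : ∀ y, 2 * g y + 1 = f^[K y + 1] (2*y+1) := by
    intro y
    have h1 := hgodd y
    have := Nat.div_add_mod (f^[K y + 1] (2*y+1)) 2
    simp only [hgdef]
    omega
  -- computability of g
  have hstart : Computable fun y : ℕ => 2*y+1 :=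
    Primrec.to_comp
      ((Primrec.nat_add.comp (Primrec.nat_mul.comp (Primrec.const 2) Primrec.id)
        (Primrec.const 1)))
  have horb : Computable fun p : ℕ × ℕ => f^[p.2 + 1] (2*p.1+1) :=
    hFit.comp ((hstart.comp Computable.fst).pair
      (Primrec.to_comp (Primrec.nat_add.comp Primrec.snd (Primrec.const 1))))
  have hmod2 : Computable fun n : ℕ => decide (n % 2 = 1) :=
    Primrec.to_comp
      (Primrec.eq.comp (Primrec.nat_mod.comp Primrec.id (Primrec.const 2)) (Primrec.const 1)).decide
  have hpB : Computable₂ fun (y k : ℕ) => decide ((f^[k+1] (2*y+1)) % 2 = 1) :=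
    (hmod2.comp horb).to₂
  have hrf : Partrec fun y : ℕ =>
      Nat.rfind (fun k => Part.some (decide ((f^[k+1] (2*y+1)) % 2 = 1))) :=
    Partrec.rfind hpB.partrec₂
  have hGmap : Partrec fun y : ℕ =>
      (Nat.rfind (fun k => Part.some (decide ((f^[k+1] (2*y+1)) % 2 = 1)))).map
        (fun k => (f^[k+1] (2*y+1)) / 2) :=
    hrf.map (hdiv2.comp horb).to₂
  have hgc : Computable g := by
    refine Partrec.of_eq_tot hGmap ?_
    intro y
    have hK : K y ∈ Nat.rfind (fun k => Part.some (decide ((f^[k+1] (2*y+1)) % 2 = 1))) := by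
      refine Nat.mem_rfind.2 ⟨?_, ?_⟩
      · exact Part.mem_some_iff.2 ((decide_eq_true (hgodd y)).symm)
      · intro m hm
        have h0 := hKmin y m hm
        exact Part.mem_some_iff.2 ((decide_eq_false (by omega)).symm)
    exact Part.mem_map _ hK
  -- g is a reduction of Y to Y
  have hsync : ∀ y y' : ℕ, Y y y' → ∀ k, (f^[k] (2*y+1)) % 2 = (f^[k] (2*y'+1)) % 2 := by
    intro y y' h k
    exact Jpar ((Jiter k _ _).mp ((Jodd y y').mpr h))
  have hKeq : ∀ y y' : ℕ, Y y y' → K y = K y' := by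
    intro y y' h
    have hle : ∀ z z' : ℕ, Y z z' → K z ≤ K z' := by
      intro z z' hzz'
      refine Nat.find_min' (hstar z) ?_
      have := Nat.find_spec (hstar z')
      rw [hsync z z' hzz' (K z' + 1)]
      exact this
    exact le_antisymm (hle y y' h) (hle y' y (hYe.symm h))
  have hgred : ∀ y y' : ℕ, Y y y' ↔ Y (g y) (g y') := by
    intro y y'
    constructor
    · intro h
      refine (Jodd _ _).mp ?_
      rw [hg2 y, hg2 y', hKeq y y' h]
      exact (Jiter (K y' + 1) _ _).mp ((Jodd y y').mpr h)
    · intro h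
      have hJg : join X Y (f^[K y + 1] (2*y+1)) (f^[K y' + 1] (2*y'+1)) := by
        rw [← hg2 y, ← hg2 y']
        exact (Jodd _ _).mpr h
      have main : ∀ z z' : ℕ, K z ≤ K z' →
          join X Y (f^[K z + 1] (2*z+1)) (f^[K z' + 1] (2*z'+1)) → Y z z' := by
        intro z z' hle hJ
        have e : f^[K z + 1] (f^[K z' - K z] (2*z'+1)) = f^[K z' + 1] (2*z'+1) := by
          rw [← Function.iterate_add_apply]; congr 1; omega
        have hbase : join X Y (2*z+1) (f^[K z' - K z] (2*z'+1)) := by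
          refine (Jiter (K z + 1) _ _).mpr ?_
          rw [e]; exact hJ
        rcases Nat.eq_or_lt_of_le hle with heq | hlt
        · rw [heq] at hbase
          simp only [Nat.sub_self] at hbase
          exact (Jodd z z').mp hbase
        · exfalso
          have hp := Jpar hbase
          have h' := hKmin z' (K z' - K z - 1) (by omega)
          rw [(by omega : K z' - K z - 1 + 1 = K z' - K z)] at h'
          omega
      rcases le_total (K y) (K y') with hle | hle
      · exact main y y' hle hJg
      · exact hYe.symm (main y' y hle (Jsymm hJg))
  -- g misses the class of w0
  have hmiss2 : ∀ x, ¬ Y (g x) w0 := by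
    intro x hY0
    have hJg : join X Y (f^[K x + 1] (2*x+1)) (f^[j1] b) := by
      rw [← hg2 x, ← hw0]
      exact (Jodd _ _).mpr hY0
    rcases le_or_gt (K x + 1) j1 with hle | hlt
    · -- cancel K x + 1 iterations : join (2x+1) (f^[j1 - (Kx+1)] b), parity contradiction
      have e : f^[K x + 1] (f^[j1 - (K x + 1)] b) = f^[j1] b := by
        rw [← Function.iterate_add_apply]; congr 1; omega
      have hbase : join X Y (2*x+1) (f^[j1 - (K x + 1)] b) := by
        refine (Jiter (K x + 1) _ _).mpr ?_
        rw [e]; exact hJg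
      have hp := Jpar hbase
      have h' := hmin (j1 - (K x + 1)) (by omega)
      omega
    · -- cancel j1 iterations : join (f^[Kx+1-j1] (2x+1)) b, contradicting missedness
      have e : f^[j1] (f^[K x + 1 - j1] (2*x+1)) = f^[K x + 1] (2*x+1) := by
        rw [← Function.iterate_add_apply]; congr 1; omega
      have hbase : join X Y (f^[K x + 1 - j1] (2*x+1)) b := by
        refine (Jiter j1 _ _).mpr ?_
        rw [e]; exact hJg
      exact hbm (2*x+1) (K x + 1 - j1) (by omega) (Jsymm hbase)
  obtain ⟨x, hx⟩ := hYsf g ⟨hgc, hgred⟩ w0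
  exact hmiss2 x hx
end

section
/- If F is a finite ceer (finitely many equivalence classes) and X is a self-full ceer, then F ⊕ X is self-full. -/
namespace Stmt10Aux

lemma join_mod {F X : ℕ → ℕ → Prop} {a b : ℕ} (h : join F X a b) : a % 2 = b % 2 := by
  rcases h with ⟨x, y, rfl, rfl, _⟩ | ⟨x, y, rfl, rfl, _⟩ <;> omega

lemma join_even_iff {F X : ℕ → ℕ → Prop} {x y : ℕ} : join F X (2*x) (2*y) ↔ F x y := by
  constructor
  · rintro (⟨x', y', hx, hy, h⟩ | ⟨x', y', hx, hy, h⟩)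
    · obtain rfl : x = x' := by omega
      obtain rfl : y = y' := by omega
      exact h
    · omega
  · intro h; exact Or.inl ⟨x, y, rfl, rfl, h⟩

lemma join_odd_iff {F X : ℕ → ℕ → Prop} {x y : ℕ} : join F X (2*x+1) (2*y+1) ↔ X x y := by
  constructor
  · rintro (⟨x', y', hx, hy, h⟩ | ⟨x', y', hx, hy, h⟩)
    · omega
    · obtain rfl : x = x' := by omega
      obtain rfl : y = y' := by omega
      exact h
  · intro h; exact Or.inr ⟨x, y, rfl, rfl, h⟩

lemma join_symm {F X : ℕ → ℕ → Prop} (hF : Equivalence F) (hX : Equivalence X)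
    {a b : ℕ} (h : join F X a b) : join F X b a := by
  rcases h with ⟨x, y, rfl, rfl, h⟩ | ⟨x, y, rfl, rfl, h⟩
  · exact Or.inl ⟨y, x, rfl, rfl, hF.symm h⟩
  · exact Or.inr ⟨y, x, rfl, rfl, hX.symm h⟩

lemma push {J : ℕ → ℕ → Prop} {f : ℕ → ℕ} (hfr : ∀ x y, J x y ↔ J (f x) (f y))
    (k : ℕ) {a b : ℕ} (h : J a b) : J (f^[k] a) (f^[k] b) := by
  induction k generalizing a b with
  | zero => exact h
  | succ k ih =>
    rw [Function.iterate_succ_apply, Function.iterate_succ_apply]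
    exact ih ((hfr a b).mp h)

lemma pull {J : ℕ → ℕ → Prop} {f : ℕ → ℕ} (hfr : ∀ x y, J x y ↔ J (f x) (f y))
    (k : ℕ) {a b : ℕ} (h : J (f^[k] a) (f^[k] b)) : J a b := by
  induction k generalizing a b with
  | zero => exact h
  | succ k ih =>
    rw [Function.iterate_succ_apply, Function.iterate_succ_apply] at h
    exact (hfr a b).mpr (ih h)

lemma pigeon {F : ℕ → ℕ → Prop} (hF : Equivalence F) (l : List ℕ)
    (hl : ∀ x, ∃ y ∈ l, F x y) (v : Fin (l.length + 1) → ℕ) :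
    ∃ i j : Fin (l.length + 1), (i : ℕ) < j ∧ F (v i) (v j) := by
  have hch : ∀ i : Fin (l.length+1), ∃ k : Fin l.length, F (v i) (l.get k) := by
    intro i
    obtain ⟨y, hy, hFy⟩ := hl (v i)
    obtain ⟨k, hk⟩ := List.mem_iff_get.mp hy
    exact ⟨k, hk ▸ hFy⟩
  choose ρ hρ using hch
  obtain ⟨i, j, hne, heq⟩ := Fintype.exists_ne_map_eq_of_card_lt ρ (by simp)
  have key : ∀ i j : Fin (l.length+1), ρ i = ρ j → F (v i) (v j) := by
    intro i j hij
    have h2 := hF.symm (hρ j)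
    rw [← hij] at h2
    exact hF.trans (hρ i) h2
  rcases lt_or_gt_of_ne hne with h | h
  · exact ⟨i, j, h, key i j heq⟩
  · exact ⟨j, i, h, key j i heq.symm⟩

lemma comp_iterate {g : ℕ → ℕ} (hg : Computable g) : ∀ m, Computable g^[m]
  | 0 => Computable.id
  | (m+1) => by
    rw [Function.iterate_succ]
    exact (comp_iterate hg m).comp hg

lemma stepf_comp {f : ℕ → ℕ} (hf : Computable f) :
    Computable (fun a => if a % 2 = 1 then a else f a) := by
  have heq : (fun a => if a % 2 = 1 then a else f a)
      = fun a => a % 2 * a + (1 - a % 2) * f a := by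
    funext a
    rcases Nat.mod_two_eq_zero_or_one a with h | h <;> simp [h]
  rw [heq]
  have hmod : Primrec fun a : ℕ => a % 2 :=
    Primrec.nat_mod.comp Primrec.id (Primrec.const 2)
  have h1 : Computable fun a : ℕ => a % 2 * a :=
    (Primrec.nat_mul.comp hmod Primrec.id).to_comp
  have h2 : Computable fun a : ℕ => (1 - a % 2) * f a :=
    Primrec.nat_mul.to_comp.comp ((Primrec.nat_sub.comp (Primrec.const 1) hmod).to_comp) hf
  exact Primrec.nat_add.to_comp.comp h1 h2

lemma stepf_fix {f : ℕ → ℕ} : ∀ (m : ℕ) (a : ℕ), a % 2 = 1 →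
    (fun a => if a % 2 = 1 then a else f a)^[m] a = a := by
  intro m
  induction m with
  | zero => intro a _; rfl
  | succ m ih =>
    intro a ha
    rw [Function.iterate_succ_apply]
    simp only [ha, if_pos rfl]
    exact ih a ha

lemma stepf_reach {f : ℕ → ℕ} : ∀ (m k : ℕ) (a : ℕ), k ≤ m →
    f^[k] a % 2 = 1 → (∀ j, j < k → f^[j] a % 2 = 0) →
    (fun a => if a % 2 = 1 then a else f a)^[m] a = f^[k] a := by
  intro m
  induction m with
  | zero =>
    intro k a hk hodd _
    obtain rfl : k = 0 := by omega
    rfl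
  | succ m ih =>
    intro k a hk hodd hmin
    cases k with
    | zero =>
      simp only [Function.iterate_zero_apply] at hodd ⊢
      exact stepf_fix (m+1) a hodd
    | succ k =>
      have ha : a % 2 = 0 := by
        have := hmin 0 (Nat.succ_pos k)
        simpa using this
      rw [Function.iterate_succ_apply]
      have hstep : (if a % 2 = 1 then a else f a) = f a := by
        rw [if_neg]; omega
      rw [hstep]
      rw [ih k (f a) (by omega)
        (by rw [← Function.iterate_succ_apply]; exact hodd)
        (fun j hj => by rw [← Function.iterate_succ_apply]; exact hmin (j+1) (by omega))]
      rw [← Function.iterate_succ_apply]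

end Stmt10Aux
/-- If `F` is a finite ceer and `X` is self-full, then `F ⊕ X` is self-full. -/
theorem stmt10 (F X : ℕ → ℕ → Prop) (hF : Ceer F) (hFfin : FiniteClasses F)
    (hX : Ceer X) (hsf : SelfFull X) :
    SelfFull (join F X) := by
  obtain ⟨l, hl⟩ := hFfin
  intro f hf b
  obtain ⟨hfc, hfr⟩ := hf
  set L := l.length with hLdef
  -- Lemma A: from any odd number, the f-orbit reaches an odd number within L+1 steps
  have hA : ∀ n : ℕ, ∃ k, k ≤ L ∧ f^[k+1] (2*n+1) % 2 = 1 := by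
    intro n
    by_contra hcon
    push_neg at hcon
    have heven : ∀ k, k ≤ L → f^[k+1] (2*n+1) % 2 = 0 := by
      intro k hk
      have := hcon k hk
      omega
    have hv : ∀ i : Fin (L + 1), 2 * (f^[(i:ℕ)+1] (2*n+1) / 2) = f^[(i:ℕ)+1] (2*n+1) := by
      intro i
      have := heven i (by omega)
      omega
    obtain ⟨i, j, hij, hFij⟩ := Stmt10Aux.pigeon hF.1 l hl
      (fun i : Fin (L+1) => f^[(i:ℕ)+1] (2*n+1) / 2)
    have h1 : join F X (f^[(i:ℕ)+1] (2*n+1)) (f^[(j:ℕ)+1] (2*n+1)) := by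
      rw [← hv i, ← hv j]
      exact Stmt10Aux.join_even_iff.mpr hFij
    have hsum : (j:ℕ)+1 = ((i:ℕ)+1) + ((j:ℕ) - i) := by omega
    have hrw : f^[(j:ℕ)+1] (2*n+1) = f^[(i:ℕ)+1] (f^[(j:ℕ)-i] (2*n+1)) := by
      rw [hsum]; exact Function.iterate_add_apply f ((i:ℕ)+1) ((j:ℕ)-(i:ℕ)) _
    rw [hrw] at h1
    have h2 := Stmt10Aux.pull hfr ((i:ℕ)+1) h1
    have hpar := Stmt10Aux.join_mod h2
    have hd : (j:ℕ) - i = (((j:ℕ) - i - 1)) + 1 := by omega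
    have := heven ((j:ℕ) - i - 1) (by omega)
    rw [hd] at hpar
    omega
  have hA' : ∀ n, ∃ k, f^[k+1] (2*n+1) % 2 = 1 := fun n => (hA n).imp fun k hk => hk.2
  set K : ℕ → ℕ := fun n => Nat.find (hA' n) with hKdef
  have hKodd : ∀ n, f^[K n + 1] (2*n+1) % 2 = 1 := fun n => Nat.find_spec (hA' n)
  have hKle : ∀ n, K n ≤ L := by
    intro n
    obtain ⟨k, hkL, hk⟩ := hA n
    exact le_trans (Nat.find_min' (hA' n) hk) hkL
  have hKmin : ∀ n j, j < K n → f^[j+1] (2*n+1) % 2 = 0 := by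
    intro n j hj
    have := Nat.find_min (hA' n) hj
    omega
  set stepf : ℕ → ℕ := fun a => if a % 2 = 1 then a else f a with hstepdef
  set h : ℕ → ℕ := fun n => (stepf^[L] (f (2*n+1))) / 2 with hhdef
  -- key equation for h
  have hhn : ∀ n, 2 * h n + 1 = f^[K n + 1] (2*n+1) := by
    intro n
    have hr := Stmt10Aux.stepf_reach (f := f) L (K n) (f (2*n+1)) (hKle n)
      (by rw [← Function.iterate_succ_apply]; exact hKodd n)
      (fun j hj => by rw [← Function.iterate_succ_apply]; exact hKmin n j hj)
    have heq2 : h n = f^[K n] (f (2*n+1)) / 2 := by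
      rw [hhdef]; simp only; rw [hr]
    rw [← Function.iterate_succ_apply] at heq2
    simp only [Nat.succ_eq_add_one] at heq2
    have hodd := hKodd n
    omega
  -- h is a reduction of X to X
  have hred : ∀ n m, X n m ↔ X (h n) (h m) := by
    intro n m
    constructor
    · intro hx
      have hJ : join F X (2*n+1) (2*m+1) := Stmt10Aux.join_odd_iff.mpr hx
      have hpt : ∀ k, f^[k+1] (2*n+1) % 2 = f^[k+1] (2*m+1) % 2 :=
        fun k => Stmt10Aux.join_mod (Stmt10Aux.push hfr (k+1) hJ)
      have hKeq : K n = K m := by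
        apply le_antisymm
        · exact Nat.find_min' (hA' n) (by rw [hpt (K m)]; exact hKodd m)
        · exact Nat.find_min' (hA' m) (by rw [← hpt (K n)]; exact hKodd n)
      have hJo := Stmt10Aux.push hfr (K n + 1) hJ
      apply Stmt10Aux.join_odd_iff.mp
      rw [hhn n, hhn m, ← hKeq]
      exact hJo
    · intro hx
      have hJo : join F X (f^[K n + 1] (2*n+1)) (f^[K m + 1] (2*m+1)) := by
        rw [← hhn n, ← hhn m]
        exact Stmt10Aux.join_odd_iff.mpr hx
      have hKeq : K n = K m := by
        by_contra hne
        rcases Nat.lt_or_ge (K n) (K m) with hlt | hge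
        · have hsum : K m + 1 = (K n + 1) + (K m - K n) := by omega
          have hrw : f^[K m + 1] (2*m+1) = f^[K n + 1] (f^[K m - K n] (2*m+1)) := by
            rw [hsum]; exact Function.iterate_add_apply f (K n + 1) (K m - K n) _
          rw [hrw] at hJo
          have h2 := Stmt10Aux.pull hfr (K n + 1) hJo
          have hpar := Stmt10Aux.join_mod h2
          have hd : K m - K n = (K m - K n - 1) + 1 := by omega
          have := hKmin m (K m - K n - 1) (by omega)
          rw [hd] at hpar
          omega
        · have hlt : K m < K n := by omega
          have hsum : K n + 1 = (K m + 1) + (K n - K m) := by omega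
          have hrw : f^[K n + 1] (2*n+1) = f^[K m + 1] (f^[K n - K m] (2*n+1)) := by
            rw [hsum]; exact Function.iterate_add_apply f (K m + 1) (K n - K m) _
          rw [hrw] at hJo
          have h2 := Stmt10Aux.pull hfr (K m + 1) hJo
          have hpar := Stmt10Aux.join_mod h2
          have hd : K n - K m = (K n - K m - 1) + 1 := by omega
          have := hKmin n (K n - K m - 1) (by omega)
          rw [hd] at hpar
          omega
      rw [hKeq] at hJo
      exact Stmt10Aux.join_odd_iff.mp (Stmt10Aux.pull hfr (K m + 1) hJo)
  -- h is computable
  have hcomp : Computable h := by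
    have hin : Computable fun n : ℕ => f (2*n+1) := by
      have hp : Primrec fun n : ℕ => 2*n+1 :=
        Primrec.nat_add.comp (Primrec.nat_mul.comp (Primrec.const 2) Primrec.id)
          (Primrec.const 1)
      exact hfc.comp hp.to_comp
    have hit : Computable fun n : ℕ => stepf^[L] (f (2*n+1)) :=
      (Stmt10Aux.comp_iterate (Stmt10Aux.stepf_comp hfc) L).comp hin
    exact (Primrec.nat_div.comp Primrec.id (Primrec.const 2)).to_comp.comp hit
  have hsfX := hsf h ⟨hcomp, hred⟩
  -- Now show every class of the join is in the range of f
  rcases Nat.mod_two_eq_zero_or_one b with hb | hb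
  · -- b even, b = 2*y
    set y := b / 2 with hydef
    have hby : 2 * y = b := by omega
    by_cases hex : ∃ k, f^[k] (2*y) % 2 = 1
    · set K' := Nat.find hex with hK'def
      have hK'odd : f^[K'] (2*y) % 2 = 1 := Nat.find_spec hex
      have hK'min : ∀ j, j < K' → f^[j] (2*y) % 2 = 0 := by
        intro j hj
        have := Nat.find_min hex hj
        omega
      have hK'pos : 0 < K' := by
        rcases Nat.eq_zero_or_pos K' with h0 | h0
        · rw [h0] at hK'odd; simp only [Function.iterate_zero_apply] at hK'odd; omega
        · exact h0
      set m := f^[K'] (2*y) / 2 with hmdef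
      have hm : 2 * m + 1 = f^[K'] (2*y) := by omega
      obtain ⟨n, hn⟩ := hsfX m
      have hJ1 : join F X (f^[K n + 1] (2*n+1)) (f^[K'] (2*y)) := by
        rw [← hhn n, ← hm]
        exact Stmt10Aux.join_odd_iff.mpr hn
      rcases Nat.lt_trichotomy K' (K n + 1) with hlt | heq | hgt
      · -- K' < K n + 1 : good case
        have hsum : K n + 1 = K' + (K n + 1 - K') := by omega
        have hrw : f^[K n + 1] (2*n+1) = f^[K'] (f^[K n + 1 - K'] (2*n+1)) := by
          conv_lhs => rw [hsum]
          exact Function.iterate_add_apply f K' (K n + 1 - K') _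
        rw [hrw] at hJ1
        have h2 := Stmt10Aux.pull hfr K' hJ1
        have hd : K n + 1 - K' = (K n + 1 - K' - 1) + 1 := by omega
        rw [hd, Function.iterate_succ_apply'] at h2
        exact ⟨f^[K n + 1 - K' - 1] (2*n+1), by rw [hby] at h2; exact h2⟩
      · rw [← heq] at hJ1
        have h2 := Stmt10Aux.pull hfr K' hJ1
        have := Stmt10Aux.join_mod h2
        omega
      · -- K n + 1 < K' : contradiction with minimality of K'
        have hsum : K' = (K n + 1) + (K' - (K n + 1)) := by omega
        have hrw : f^[K'] (2*y) = f^[K n + 1] (f^[K' - (K n + 1)] (2*y)) := by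
          conv_lhs => rw [hsum]
          exact Function.iterate_add_apply f (K n + 1) (K' - (K n + 1)) _
        rw [hrw] at hJ1
        have h2 := Stmt10Aux.pull hfr (K n + 1) hJ1
        have hpar := Stmt10Aux.join_mod h2
        have := hK'min (K' - (K n + 1)) (by omega)
        omega
    · -- orbit of 2*y stays even: pigeonhole gives a loop
      push_neg at hex
      have heven : ∀ k, f^[k] (2*y) % 2 = 0 := by
        intro k
        have := hex k
        omega
      obtain ⟨i, j, hij, hFij⟩ := Stmt10Aux.pigeon hF.1 l hl
        (fun i : Fin (L+1) => f^[(i:ℕ)] (2*y) / 2)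
      have hv : ∀ k : ℕ, 2 * (f^[k] (2*y) / 2) = f^[k] (2*y) := by
        intro k
        have := heven k
        omega
      have h1 : join F X (f^[(i:ℕ)] (2*y)) (f^[(j:ℕ)] (2*y)) := by
        rw [← hv i, ← hv j]
        exact Stmt10Aux.join_even_iff.mpr hFij
      have hsum : (j:ℕ) = (i:ℕ) + ((j:ℕ) - i) := by omega
      have hrw : f^[(j:ℕ)] (2*y) = f^[(i:ℕ)] (f^[(j:ℕ)-i] (2*y)) := by
        conv_lhs => rw [hsum]
        exact Function.iterate_add_apply f (i:ℕ) ((j:ℕ)-(i:ℕ)) _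
      rw [hrw] at h1
      have h2 := Stmt10Aux.pull hfr (i:ℕ) h1
      have hd : (j:ℕ) - i = ((j:ℕ) - i - 1) + 1 := by omega
      rw [hd, Function.iterate_succ_apply'] at h2
      refine ⟨f^[(j:ℕ) - i - 1] (2*y), ?_⟩
      rw [← hby]
      exact Stmt10Aux.join_symm hF.1 hX.1 h2
  · -- b odd, b = 2*y+1
    set y := b / 2 with hydef
    have hby : 2 * y + 1 = b := by omega
    obtain ⟨n, hn⟩ := hsfX y
    have hJ1 : join F X (f^[K n + 1] (2*n+1)) (2*y+1) := by
      rw [← hhn n]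
      exact Stmt10Aux.join_odd_iff.mpr hn
    rw [Function.iterate_succ_apply'] at hJ1
    exact ⟨f^[K n] (2*n+1), by rw [hby] at hJ1; exact hJ1⟩
end

section
/- Suppose X and Y are ceers with X self-full, and f₂ : X ⊕ Y → X ⊕ Y is a computable reduction such that the set C_X = {2n : f₂⁽ᵏ⁾(2n) is even for all k} and C_Y = {2n : f₂⁽ᵏ⁾(2n) is odd for all k ≥ 1} partition the even numbers and are both decidable and X⊕Y-closed. Then the range of f₂ restricted to C_X intersects every X⊕Y-class contained in C_X, and no odd number is mapped by f₂ into C_X. -/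
/-- Lemma "Cx": the range of `f₂` restricted to `C_X` meets every class of `C_X`,
and no odd number maps into `C_X`. -/
theorem stmt12 (X Y : ℕ → ℕ → Prop) (hX : Ceer X) (hY : Ceer Y) (hsf : SelfFull X)
    (f₂ : ℕ → ℕ) (hf : CReduction f₂ (join X Y) (join X Y))
    (CX CY : Set ℕ)
    (hCX : CX = {a | ∃ n, a = 2*n ∧ ∀ k, Even (f₂^[k] (2*n))})
    (hCY : CY = {a | ∃ n, a = 2*n ∧ ∀ k, 1 ≤ k → ¬ Even (f₂^[k] (2*n))})
    (hcover : ∀ n, 2*n ∈ CX ∨ 2*n ∈ CY) (hdisj : Disjoint CX CY)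
    (hdecX : ComputablePred (· ∈ CX)) (hdecY : ComputablePred (· ∈ CY))
    (hclX : ∀ a b, join X Y a b → a ∈ CX → b ∈ CX)
    (hclY : ∀ a b, join X Y a b → a ∈ CY → b ∈ CY) :
    (∀ a ∈ CX, ∃ b ∈ CX, join X Y (f₂ b) a) ∧ (∀ m, f₂ (2*m+1) ∉ CX) := by
  obtain ⟨hfc, hfr⟩ := hf
  have jsymm : ∀ a b, join X Y a b → join X Y b a := by
    rintro a b (⟨x, y, rfl, rfl, h⟩ | ⟨x, y, rfl, rfl, h⟩)
    · exact Or.inl ⟨y, x, rfl, rfl, hX.1.symm h⟩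
    · exact Or.inr ⟨y, x, rfl, rfl, hY.1.symm h⟩
  have joinEE : ∀ n m, join X Y (2*n) (2*m) ↔ X n m := by
    intro n m
    constructor
    · rintro (⟨x, y, hx, hy, h⟩ | ⟨x, y, hx, hy, h⟩)
      · obtain rfl : n = x := by omega
        obtain rfl : m = y := by omega
        exact h
      · omega
    · intro h; exact Or.inl ⟨n, m, rfl, rfl, h⟩
  have joinEO : ∀ n m, ¬ join X Y (2*n) (2*m+1) := by
    rintro n m (⟨x, y, hx, hy, h⟩ | ⟨x, y, hx, hy, h⟩) <;> omega
  -- f₂ maps CX into CX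
  have hfCX : ∀ a ∈ CX, f₂ a ∈ CX := by
    intro a ha
    rw [hCX] at ha ⊢
    obtain ⟨n, rfl, hn⟩ := ha
    have he : Even (f₂ (2*n)) := by simpa using hn 1
    obtain ⟨m, hm⟩ := he
    refine ⟨m, by omega, fun k => ?_⟩
    have h2m : 2*m = f₂ (2*n) := by omega
    rw [h2m, ← Function.iterate_succ_apply]
    exact hn (k+1)
  have hevenE : ∀ n, 2*n ∈ CX → 2 * (f₂ (2*n) / 2) = f₂ (2*n) := by
    intro n hn
    rw [hCX] at hn
    obtain ⟨n', hn', h⟩ := hn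
    obtain rfl : n = n' := by omega
    have he : Even (f₂ (2*n)) := by simpa using h 1
    obtain ⟨m, hm⟩ := he
    omega
  obtain ⟨χ, hχc, hχ⟩ : ∃ χ : ℕ → Bool, Computable χ ∧ ∀ a, χ a = true ↔ a ∈ CX := by
    obtain ⟨D, hD⟩ := hdecX
    exact ⟨fun a => @decide (a ∈ CX) (D a), hD, fun a => @decide_eq_true_iff _ (D a)⟩
  set g : ℕ → ℕ := fun n => bif χ (2*n) then f₂ (2*n) / 2 else n with hg
  have p2 : Primrec fun n : ℕ => 2*n := Primrec.nat_mul.comp (Primrec.const 2) Primrec.id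
  have hgc : Computable g :=
    Computable.cond (hχc.comp p2.to_comp)
      (((Primrec.nat_div.comp Primrec.id (Primrec.const 2)).to_comp).comp
        (hfc.comp p2.to_comp)) Computable.id
  have hgin : ∀ n, 2*n ∈ CX → g n = f₂ (2*n) / 2 := by
    intro n h; simp [hg, (hχ _).2 h]
  have hgout : ∀ n, 2*n ∉ CX → g n = n := by
    intro n h
    have : χ (2*n) = false := by
      cases hc : χ (2*n)
      · rfl
      · exact absurd ((hχ _).1 hc) h
    simp [hg, this]
  have hgred : ∀ n m, X n m ↔ X (g n) (g m) := by
    intro n m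
    by_cases hn : 2*n ∈ CX <;> by_cases hm : 2*m ∈ CX
    · rw [hgin n hn, hgin m hm]
      rw [← joinEE, hfr, ← joinEE] at *
      rw [hevenE n hn, hevenE m hm]
    · rw [hgin n hn, hgout m hm]
      constructor
      · intro h
        exact absurd (hclX _ _ ((joinEE n m).2 h) hn) hm
      · intro h
        have hj : join X Y (f₂ (2*n)) (2*m) := by
          rw [← hevenE n hn]; exact (joinEE _ _).2 h
        exact absurd (hclX _ _ hj (hfCX _ hn)) hm
    · rw [hgout n hn, hgin m hm]
      constructor
      · intro h
        exact absurd (hclX _ _ (jsymm _ _ ((joinEE n m).2 h)) hm) hn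
      · intro h
        have hj : join X Y (2*n) (f₂ (2*m)) := by
          rw [← hevenE m hm]; exact (joinEE _ _).2 h
        exact absurd (hclX _ _ (jsymm _ _ hj) (hfCX _ hm)) hn
    · rw [hgout n hn, hgout m hm]
  have part1 : ∀ a ∈ CX, ∃ b ∈ CX, join X Y (f₂ b) a := by
    intro a ha
    have ha' := ha
    rw [hCX] at ha'
    obtain ⟨n, rfl, -⟩ := ha'
    obtain ⟨x, hx⟩ := hsf g ⟨hgc, hgred⟩ n
    have hxCX : 2*x ∈ CX := by
      by_contra hc
      rw [hgout x hc] at hx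
      exact hc (hclX _ _ (jsymm _ _ ((joinEE x n).2 hx)) ha)
    refine ⟨2*x, hxCX, ?_⟩
    rw [hgin x hxCX] at hx
    have := (joinEE _ _).2 hx
    rwa [hevenE x hxCX] at this
  refine ⟨part1, ?_⟩
  intro m hm
  obtain ⟨b, hb, hjb⟩ := part1 _ hm
  have hb' := hb
  rw [hCX] at hb'
  obtain ⟨n, rfl, -⟩ := hb'
  rw [← hfr] at hjb
  exact joinEO n m hjb
end

section
/- Under the hypotheses of the previous setting (f₂ : X ⊕ Y → X ⊕ Y a reduction with even numbers partitioned into decidable X⊕Y-closed sets C_X, C_Y where f₂ maps C_X into evens forever and maps C_Y to odds after one step), if Y is self-full then for every m, there is an odd y such that 2m+1 is X⊕Y-equivalent to f₂(y) or to f₂(f₂(y)). -/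
/-- Lemma "ontoY": every odd class is hit by `f₂` or `f₂²` on an odd number. -/
theorem stmt13 (X Y : ℕ → ℕ → Prop) (hX : Ceer X) (hY : Ceer Y) (hsfY : SelfFull Y)
    (f₂ : ℕ → ℕ) (hf : CReduction f₂ (join X Y) (join X Y))
    (CX CY : Set ℕ)
    (hCX : CX = {a | ∃ n, a = 2*n ∧ ∀ k, Even (f₂^[k] (2*n))})
    (hCY : CY = {a | ∃ n, a = 2*n ∧ ∀ k, 1 ≤ k → ¬ Even (f₂^[k] (2*n))})
    (hcover : ∀ n, 2*n ∈ CX ∨ 2*n ∈ CY) (hdisj : Disjoint CX CY)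
    (hdecX : ComputablePred (· ∈ CX)) (hdecY : ComputablePred (· ∈ CY))
    (hclX : ∀ a b, join X Y a b → a ∈ CX → b ∈ CX)
    (hclY : ∀ a b, join X Y a b → a ∈ CY → b ∈ CY)
    (hnoodd : ∀ m, f₂ (2*m+1) ∉ CX) :
    ∀ m, ∃ y, Odd y ∧
      (join X Y (2*m+1) (f₂ y) ∨ join X Y (2*m+1) (f₂ (f₂ y))) := by
  classical
  obtain ⟨hcomp, hred⟩ := hf
  -- auxiliary: join of numbers with different parity is false
  have hpar : ∀ a b : ℕ, join X Y a b → a % 2 = b % 2 := by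
    rintro a b (⟨x, y, hx, hy, _⟩ | ⟨x, y, hx, hy, _⟩) <;> omega
  have hoddiff : ∀ m m' : ℕ, join X Y (2*m+1) (2*m'+1) ↔ Y m m' := by
    intro m m'
    constructor
    · rintro (⟨x, y, hx, hy, _⟩ | ⟨x, y, hx, hy, h⟩)
      · omega
      · have hxm : x = m := by omega
        have hym : y = m' := by omega
        rwa [hxm, hym] at h
    · intro h; exact Or.inr ⟨m, m', rfl, rfl, h⟩
  -- if f₂ of an odd number is even, then f₂ of that is odd
  have hres : ∀ x : ℕ, ¬ Odd (f₂ (2*x+1)) → ¬ Even (f₂ (f₂ (2*x+1))) := by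
    intro x hx
    have he : Even (f₂ (2*x+1)) := Nat.not_odd_iff_even.mp hx
    obtain ⟨n, hn⟩ : ∃ n, f₂ (2*x+1) = 2*n := by
      obtain ⟨r, hr⟩ := he; exact ⟨r, by omega⟩
    have hCYmem : (2*n : ℕ) ∈ CY := by
      rcases hcover n with h | h
      · exact absurd (hn ▸ h) (hnoodd x)
      · exact h
    rw [hCY] at hCYmem
    obtain ⟨n', hn', hk⟩ := hCYmem
    have : n' = n := by omega
    subst this
    have := hk 1 le_rfl
    rw [Function.iterate_one] at this
    rwa [hn]
  -- the self-reduction g of Y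
  set g : ℕ → ℕ := fun m =>
    (bif Nat.bodd (f₂ (2*m+1)) then f₂ (2*m+1) else f₂ (f₂ (2*m+1))) / 2 with hgdef
  have hbodd : ∀ a : ℕ, Nat.bodd a = true ↔ Odd a := by
    intro a; rw [Nat.odd_iff, Nat.bodd_eq_one_and_ne_zero]; simp [Nat.mod_two_eq_zero_or_one]
  have hgodd : ∀ x : ℕ, 2 * g x + 1 =
      (if Odd (f₂ (2*x+1)) then f₂ (2*x+1) else f₂ (f₂ (2*x+1))) := by
    intro x
    by_cases h : Odd (f₂ (2*x+1))
    · have hb : Nat.bodd (f₂ (2*x+1)) = true := (hbodd _).mpr h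
      simp only [hgdef, hb, cond_true, if_pos h]
      obtain ⟨t, ht⟩ := h
      omega
    · have hb : Nat.bodd (f₂ (2*x+1)) = false := by
        cases hbb : Nat.bodd (f₂ (2*x+1))
        · rfl
        · exact absurd ((hbodd _).mp hbb) h
      have ho : Odd (f₂ (f₂ (2*x+1))) := Nat.not_even_iff_odd.mp (hres x h)
      simp only [hgdef, hb, cond_false, if_neg h]
      obtain ⟨t, ht⟩ := ho
      omega
  -- g is computable
  have hinner : Computable fun m : ℕ => f₂ (2*m+1) := by
    have h1 : Computable fun m : ℕ => 2*m+1 :=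
      Primrec.to_comp (Primrec.succ.comp (Primrec.nat_mul.comp (Primrec.const 2) Primrec.id))
    exact hcomp.comp h1
  have hgcomp : Computable g := by
    have hc : Computable fun m : ℕ => Nat.bodd (f₂ (2*m+1)) :=
      (Primrec.nat_bodd.to_comp).comp hinner
    have h2 : Computable fun m : ℕ => f₂ (f₂ (2*m+1)) := hcomp.comp hinner
    have h3 : Computable fun m : ℕ =>
        (bif Nat.bodd (f₂ (2*m+1)) then f₂ (2*m+1) else f₂ (f₂ (2*m+1))) :=
      Computable.cond hc hinner h2
    have hdiv : Computable fun a : ℕ => a / 2 :=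
      Primrec.to_comp (Primrec.nat_div.comp Primrec.id (Primrec.const 2))
    exact hdiv.comp h3
  -- g is a reduction of Y to Y
  have hYg : ∀ m m', Y m m' ↔ Y (g m) (g m') := by
    intro m m'
    have e1 : Y m m' ↔ join X Y (f₂ (2*m+1)) (f₂ (2*m'+1)) :=
      (hoddiff m m').symm.trans (hred _ _)
    have e2 : Y (g m) (g m') ↔ join X Y (2 * g m + 1) (2 * g m' + 1) :=
      (hoddiff _ _).symm
    by_cases h1 : Odd (f₂ (2*m+1)) <;> by_cases h2 : Odd (f₂ (2*m'+1))
    · rw [e1, e2, hgodd m, hgodd m', if_pos h1, if_pos h2]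
    · -- m side odd, m' side even: both sides false
      constructor
      · intro h
        have hj := e1.mp h
        have := hpar _ _ hj
        rw [Nat.odd_iff] at h1
        have h2e := Nat.even_iff.mp (Nat.not_odd_iff_even.mp h2)
        omega
      · intro h
        have hj := e2.mp h
        rw [hgodd m, hgodd m', if_pos h1, if_neg h2] at hj
        have hj' : join X Y (2*m+1) (f₂ (2*m'+1)) := (hred _ _).mpr hj
        have := hpar _ _ hj'
        have h2e := Nat.even_iff.mp (Nat.not_odd_iff_even.mp h2)
        omega
    · constructor
      · intro h
        have hj := e1.mp h
        have := hpar _ _ hj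
        rw [Nat.odd_iff] at h2
        have h1e := Nat.even_iff.mp (Nat.not_odd_iff_even.mp h1)
        omega
      · intro h
        have hj := e2.mp h
        rw [hgodd m, hgodd m', if_neg h1, if_pos h2] at hj
        have hj' : join X Y (f₂ (2*m+1)) (2*m'+1) := by
          have hsymm : ∀ a b, join X Y a b → join X Y b a := by
            rintro a b (⟨x, y, hx, hy, hr⟩ | ⟨x, y, hx, hy, hr⟩)
            · exact Or.inl ⟨y, x, hy, hx, hX.1.symm hr⟩
            · exact Or.inr ⟨y, x, hy, hx, hY.1.symm hr⟩
          exact hsymm _ _ ((hred _ _).mpr (hsymm _ _ hj))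
        have := hpar _ _ hj'
        have h1e := Nat.even_iff.mp (Nat.not_odd_iff_even.mp h1)
        omega
    · rw [e1, e2, hgodd m, hgodd m', if_neg h1, if_neg h2]
      exact hred _ _
  -- apply self-fullness
  have hCRg : CReduction g Y Y := ⟨hgcomp, hYg⟩
  intro m
  obtain ⟨x, hx⟩ := hsfY g hCRg m
  refine ⟨2*x+1, ⟨x, by omega⟩, ?_⟩
  have hj : join X Y (2*m+1) (2 * g x + 1) := (hoddiff m (g x)).mpr (hY.1.symm hx)
  by_cases h : Odd (f₂ (2*x+1))
  · left; rwa [hgodd x, if_pos h] at hj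
  · right; rwa [hgodd x, if_neg h] at hj
end

section
/- If R and S are ceers, f : R → S is a computable reduction, and the range of f intersects every S-equivalence class, then S ≤ R; consequently R and S are computably bi-reducible. -/
/-- If a reduction `f : R → S` between ceers hits every `S`-class, then `S ≤ R`;
hence `R` and `S` are bi-reducible. -/
theorem stmt19 (R S : ℕ → ℕ → Prop) (hR : Ceer R) (hS : Ceer S) (f : ℕ → ℕ)
    (hf : CReduction f R S) (honto : ∀ s, ∃ x, S (f x) s) :
    Reduces S R ∧ (Reduces R S ∧ Reduces S R) := by
  obtain ⟨hfc, hfr⟩ := hf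
  obtain ⟨hSe, hSre⟩ := hS
  have hnp : Nat.Partrec fun n => Part.bind (Encodable.decode (α := ℕ × ℕ) n)
      fun p => ((fun p : ℕ × ℕ => Part.assert (S p.1 p.2) fun _ => Part.some ()) p).map
        Encodable.encode := hSre
  obtain ⟨c, hc⟩ := Nat.Partrec.Code.exists_code.1 hnp
  have hdec : ∀ a b : ℕ, Encodable.decode (α := ℕ × ℕ) (Nat.pair a b) = some (a, b) := by
    intro a b
    have := Encodable.encodek (a, b)
    simpa [Encodable.encode_prod_val] using this
  have hdom : ∀ a b : ℕ, (Nat.Partrec.Code.eval c (Nat.pair a b)).Dom ↔ S a b := by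
    intro a b
    rw [hc]
    simp [hdec a b, Part.assert]
  -- the search function
  set ev : ℕ → ℕ → Option ℕ := fun s n =>
    bif (Nat.Partrec.Code.evaln n.unpair.2 c (Nat.pair (f n.unpair.1) s)).isSome
    then some n.unpair.1 else none with hev
  have hu1 : Computable fun p : ℕ × ℕ => p.2.unpair.1 :=
    (Primrec.fst.comp (Primrec.unpair.comp Primrec.snd)).to_comp
  have hu2 : Computable fun p : ℕ × ℕ => p.2.unpair.2 :=
    (Primrec.snd.comp (Primrec.unpair.comp Primrec.snd)).to_comp
  have harg : Computable fun p : ℕ × ℕ => Nat.pair (f p.2.unpair.1) p.1 :=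
    Primrec₂.natPair.to_comp.comp (hfc.comp hu1) Computable.fst
  have hevaln : Computable fun p : ℕ × ℕ =>
      Nat.Partrec.Code.evaln p.2.unpair.2 c (Nat.pair (f p.2.unpair.1) p.1) :=
    Nat.Partrec.Code.primrec_evaln.to_comp.comp ((hu2.pair (Computable.const c)).pair harg)
  have hbool : Computable fun p : ℕ × ℕ =>
      (Nat.Partrec.Code.evaln p.2.unpair.2 c (Nat.pair (f p.2.unpair.1) p.1)).isSome :=
    Primrec.option_isSome.to_comp.comp hevaln
  have hevc : Computable₂ ev :=
    Computable.cond hbool (Computable.option_some.comp hu1) (Computable.const none)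
  set F : ℕ →. ℕ := fun s => Nat.rfindOpt (ev s) with hFdef
  have hF : Partrec F := Partrec.rfindOpt hevc
  have hFdom : ∀ s, (F s).Dom := by
    intro s
    obtain ⟨x, hx⟩ := honto s
    have hd : (Nat.Partrec.Code.eval c (Nat.pair (f x) s)).Dom := (hdom _ _).2 hx
    obtain ⟨y, hy⟩ := Part.dom_iff_mem.1 hd
    obtain ⟨k, hk⟩ := Nat.Partrec.Code.evaln_complete.1 hy
    have hsome : (Nat.Partrec.Code.evaln k c (Nat.pair (f x) s)).isSome := by
      rw [Option.isSome_iff_exists]; exact ⟨y, hk⟩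
    refine Nat.rfindOpt_dom.2 ⟨Nat.pair x k, x, ?_⟩
    simp [hev, Nat.unpair_pair, hsome]
  set g : ℕ → ℕ := fun s => (F s).get (hFdom s) with hgdef
  have hg : Computable g := hF.of_eq_tot fun s => Part.get_mem _
  have hgS : ∀ s, S (f (g s)) s := by
    intro s
    have hmem : g s ∈ F s := Part.get_mem _
    obtain ⟨n, hn⟩ := Nat.rfindOpt_spec hmem
    simp only [hev, Option.mem_def] at hn
    by_cases hb : (Nat.Partrec.Code.evaln n.unpair.2 c (Nat.pair (f n.unpair.1) s)).isSome
    · rw [hb] at hn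
      simp only [cond_true, Option.some.injEq] at hn
      obtain ⟨y, hy⟩ := Option.isSome_iff_exists.1 hb
      have := Nat.Partrec.Code.evaln_sound (n := Nat.pair (f n.unpair.1) s) hy
      have hd : (Nat.Partrec.Code.eval c (Nat.pair (f n.unpair.1) s)).Dom :=
        Part.dom_iff_mem.2 ⟨y, this⟩
      rw [← hn]
      exact (hdom _ _).1 hd
    · rw [Bool.not_eq_true] at hb
      rw [hb] at hn
      simp at hn
  have hred : ∀ x y, S x y ↔ R (g x) (g y) := by
    intro x y
    rw [hfr]
    constructor
    · intro h
      exact hSe.trans (hgS x) (hSe.trans h (hSe.symm (hgS y)))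
    · intro h
      exact hSe.trans (hSe.symm (hgS x)) (hSe.trans h (hgS y))
  exact ⟨⟨g, hg, hred⟩, ⟨f, hfc, hfr⟩, ⟨g, hg, hred⟩⟩
end
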